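/- Let 1 < p < ∞, let u₀ : ℝ → ℝ be Lipschitz continuous with compact support, and let w ∈ L^p(ℝ). Suppose there is a constant α ≥ 0 such that the translation stability estimate ‖w(·+h) − w‖_{L^p(ℝ)} ≤ α‖u₀(·+h) − u₀‖_{L^p(ℝ)} holds for every h ∈ ℝ. Then w agrees almost everywhere with a continuous function on ℝ. (Consequently, a solution of a conservation law which develops a genuine jump discontinuity from Lipschitz initial data cannot obey such a translation-invariant L^p stability estimate with p > 1.) -/

import Mathlib

open MeasureTheory Metric Set Filter
open scoped ENNReal NNReal Topology

noncomputable def avgI (w : ℝ → ℝ) (x r : ℝ) : ℝ :=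
  (2 * r)⁻¹ * ∫ t in (x - r)..(x + r), w t

lemma avgI_eq_average (w : ℝ → ℝ) (x r : ℝ) (hr : 0 < r) :
    (⨍ y in closedBall x r, w y) = avgI w x r := by
  rw [setAverage_eq, Real.volume_real_closedBall hr.le,
    Real.closedBall_eq_Icc, integral_Icc_eq_integral_Ioc, avgI,
    intervalIntegral.integral_of_le (by linarith), smul_eq_mul]

lemma avgI_halving {w : ℝ → ℝ} (hwl : LocallyIntegrable w volume) (x r : ℝ) (hr : 0 < r) :
    avgI w x (2 * r) = (avgI w (x - r) r + avgI w (x + r) r) / 2 := by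
  have hint : ∀ a b : ℝ, IntervalIntegrable w volume a b := fun a b =>
    (hwl.integrableOn_isCompact isCompact_uIcc).intervalIntegrable
  have hsplit : (∫ t in (x - 2*r)..(x + 2*r), w t)
      = (∫ t in (x - 2*r)..x, w t) + ∫ t in x..(x + 2*r), w t :=
    (intervalIntegral.integral_add_adjacent_intervals (hint _ _) (hint _ _)).symm
  simp only [avgI]
  have e1 : x - r - r = x - 2*r := by ring
  have e2 : x - r + r = x := by ring
  have e3 : x + r - r = x := by ring
  have e4 : x + r + r = x + 2*r := by ring
  rw [e1, e2, e3, e4, hsplit]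
  ring

lemma avgI_shift {p : ℝ} (hp : 1 < p) {w : ℝ → ℝ}
    (hw : MemLp w (ENNReal.ofReal p) (volume : Measure ℝ))
    {C₀ : ℝ} (hC₀ : 0 ≤ C₀)
    (hD : ∀ h : ℝ, eLpNorm (fun x => w (x + h) - w x) (ENNReal.ofReal p) (volume : Measure ℝ)
        ≤ ENNReal.ofReal (C₀ * |h|))
    (x h r : ℝ) (hr : 0 < r) :
    |avgI w (x + h) r - avgI w x r| ≤ (2 * r)⁻¹ * (C₀ * |h| * (2 * r) ^ (1 - 1/p)) := by
  have hp0 : (0:ℝ) < p := one_pos.trans hp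
  have hq1 : (1 : ℝ≥0∞) ≤ ENNReal.ofReal p := ENNReal.one_le_ofReal.mpr hp.le
  have hqR : (ENNReal.ofReal p).toReal = p := ENNReal.toReal_ofReal hp0.le
  have hβ1 : 1/p < 1 := by rw [div_lt_one hp0]; exact hp
  have hwl : LocallyIntegrable w volume := hw.locallyIntegrable hq1
  have hint : ∀ a b : ℝ, IntervalIntegrable w volume a b := fun a b =>
    (hwl.integrableOn_isCompact isCompact_uIcc).intervalIntegrable
  have hint' : IntervalIntegrable (fun t => w (t + h)) volume (x - r) (x + r) := by
    have h2 := (hint (x - r + h) (x + r + h)).comp_add_right h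
    have e1 : x - r + h - h = x - r := by ring
    have e2 : x + r + h - h = x + r := by ring
    rwa [e1, e2] at h2
  have hshift : (∫ t in (x + h - r)..(x + h + r), w t) = ∫ t in (x - r)..(x + r), w (t + h) := by
    rw [intervalIntegral.integral_comp_add_right w h]
    congr 1 <;> ring
  have hsub : avgI w (x + h) r - avgI w x r
      = (2*r)⁻¹ * ∫ t in (x - r)..(x + r), (w (t + h) - w t) := by
    rw [avgI, avgI, ← mul_sub, hshift, ← intervalIntegral.integral_sub hint' (hint _ _)]
  set f : ℝ → ℝ := fun t => w (t + h) - w t with hfdef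
  have hab : x - r ≤ x + r := by linarith
  have hfm : AEStronglyMeasurable f (volume.restrict (Ioc (x - r) (x + r))) := by
    have h1 : AEStronglyMeasurable (fun t : ℝ => w (t + h)) volume :=
      hw.1.comp_measurePreserving (measurePreserving_add_right volume h)
    exact (h1.sub hw.1).restrict
  have hvol : volume (Ioc (x - r) (x + r)) = ENNReal.ofReal (2 * r) := by
    rw [Real.volume_Ioc]; congr 1; ring
  have key : |∫ t in (x - r)..(x + r), f t| ≤ C₀ * |h| * (2 * r) ^ (1 - 1/p) := by
    rw [intervalIntegral.integral_of_le hab]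
    have h1 : ‖∫ t in Ioc (x - r) (x + r), f t ∂volume‖
        ≤ (∫⁻ t in Ioc (x - r) (x + r), ENNReal.ofReal ‖f t‖ ∂volume).toReal :=
      norm_integral_le_lintegral_norm _
    rw [Real.norm_eq_abs] at h1
    have h2 : (∫⁻ t in Ioc (x - r) (x + r), ENNReal.ofReal ‖f t‖ ∂volume)
        = eLpNorm f 1 (volume.restrict (Ioc (x - r) (x + r))) := by
      rw [eLpNorm_one_eq_lintegral_enorm]
      simp_rw [ofReal_norm]
    have h3 : eLpNorm f 1 (volume.restrict (Ioc (x - r) (x + r)))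
        ≤ eLpNorm f (ENNReal.ofReal p) (volume.restrict (Ioc (x - r) (x + r)))
          * (volume (Ioc (x - r) (x + r))) ^ (1 - 1/p) := by
      have := eLpNorm_le_eLpNorm_mul_rpow_measure_univ hq1 hfm
      simpa [Measure.restrict_apply_univ, hqR] using this
    have h4 : eLpNorm f (ENNReal.ofReal p) (volume.restrict (Ioc (x - r) (x + r)))
        ≤ ENNReal.ofReal (C₀ * |h|) :=
      (eLpNorm_mono_measure f Measure.restrict_le_self).trans (hD h)
    have h5 : (∫⁻ t in Ioc (x - r) (x + r), ENNReal.ofReal ‖f t‖ ∂volume)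
        ≤ ENNReal.ofReal (C₀ * |h|) * ENNReal.ofReal (2 * r) ^ (1 - 1/p) := by
      rw [h2]
      refine h3.trans ?_
      rw [hvol]
      exact mul_le_mul_left h4 _
    refine h1.trans ?_
    have hfin : ENNReal.ofReal (C₀ * |h|) * ENNReal.ofReal (2 * r) ^ (1 - 1/p) ≠ ⊤ :=
      ENNReal.mul_ne_top ENNReal.ofReal_ne_top
        (ENNReal.rpow_ne_top_of_nonneg (by linarith) ENNReal.ofReal_ne_top)
    refine (ENNReal.toReal_mono hfin h5).trans ?_
    rw [ENNReal.toReal_mul, ← ENNReal.toReal_rpow, ENNReal.toReal_ofReal (by positivity : (0:ℝ) ≤ 2*r)]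
    have hC : ENNReal.toReal (ENNReal.ofReal (C₀ * |h|)) ≤ C₀ * |h| :=
      le_of_eq (ENNReal.toReal_ofReal (by positivity))
    have hrp : (0:ℝ) ≤ (2 * r) ^ (1 - 1/p) := Real.rpow_nonneg (by positivity) _
    exact mul_le_mul_of_nonneg_right hC hrp
  rw [hsub, abs_mul, abs_inv, abs_of_pos (by positivity : (0:ℝ) < 2 * r)]
  exact mul_le_mul_of_nonneg_left key (by positivity)

theorem aux_continuous_rep (p : ℝ) (hp : 1 < p) (w : ℝ → ℝ)
    (hw : MemLp w (ENNReal.ofReal p) (volume : Measure ℝ))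
    (C₀ : ℝ) (hC₀ : 0 ≤ C₀)
    (hD : ∀ h : ℝ, eLpNorm (fun x => w (x + h) - w x) (ENNReal.ofReal p) (volume : Measure ℝ)
        ≤ ENNReal.ofReal (C₀ * |h|)) :
    ∃ g : ℝ → ℝ, Continuous g ∧ w =ᵐ[volume] g := by
  have hp0 : (0:ℝ) < p := one_pos.trans hp
  have hβ1 : 1/p < 1 := by rw [div_lt_one hp0]; exact hp
  have hq1 : (1 : ℝ≥0∞) ≤ ENNReal.ofReal p := ENNReal.one_le_ofReal.mpr hp.le
  have hwl : LocallyIntegrable w volume := hw.locallyIntegrable hq1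
  set ρ : ℝ := (1/2 : ℝ) ^ (1 - 1/p) with hρdef
  have hρ0 : 0 < ρ := Real.rpow_pos_of_pos (by norm_num) _
  have hρ1 : ρ < 1 := Real.rpow_lt_one (by norm_num) (by norm_num) (by linarith)
  set a : ℕ → ℝ → ℝ := fun n x => avgI w x ((1/2:ℝ)^n) with hadef
  have hrpos : ∀ n : ℕ, (0:ℝ) < (1/2:ℝ)^n := fun n => pow_pos (by norm_num) n
  have hAshift : ∀ (x h r : ℝ), 0 < r →
      |avgI w (x + h) r - avgI w x r| ≤ (2*r)⁻¹ * (C₀ * |h| * (2*r) ^ (1 - 1/p)) :=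
    fun x h r hrr => avgI_shift hp hw hC₀ hD x h r hrr
  -- geometric bound on consecutive dyadic averages
  have hgeo : ∀ x (n : ℕ), dist (a n x) (a (n+1) x) ≤ (C₀/2) * ρ^n := by
    intro x n
    set r : ℝ := (1/2:ℝ)^(n+1) with hrdef
    have hr0 : 0 < r := hrpos (n+1)
    have h2r : 2 * r = (1/2:ℝ)^n := by rw [hrdef, pow_succ]; ring
    have hrpow : ((2*r) : ℝ) ^ (1 - 1/p) = ρ ^ n := by
      rw [h2r, ← Real.rpow_natCast (1/2 : ℝ) n, ← Real.rpow_mul (by norm_num), mul_comm,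
        Real.rpow_mul (by norm_num), Real.rpow_natCast]
    have hhalf := avgI_halving hwl x r hr0
    have h1 : |avgI w (x - r) r - avgI w x r| ≤ (2*r)⁻¹ * (C₀ * r * (2*r) ^ (1 - 1/p)) := by
      have hh := hAshift x (-r) r hr0
      have e : x + -r = x - r := by ring
      rw [e, abs_neg, abs_of_pos hr0] at hh
      exact hh
    have h2 : |avgI w (x + r) r - avgI w x r| ≤ (2*r)⁻¹ * (C₀ * r * (2*r) ^ (1 - 1/p)) := by
      have hh := hAshift x r r hr0
      rwa [abs_of_pos hr0] at hh
    have han : a n x = avgI w x (2*r) := by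
      show avgI w x ((1/2:ℝ)^n) = avgI w x (2*r)
      rw [h2r]
    have hdiff : a n x - a (n+1) x
        = ((avgI w (x - r) r - avgI w x r) + (avgI w (x + r) r - avgI w x r)) / 2 := by
      rw [han, hhalf]
      show (avgI w (x - r) r + avgI w (x + r) r) / 2 - avgI w x r = _
      ring
    rw [Real.dist_eq, hdiff]
    have hbound : |((avgI w (x - r) r - avgI w x r) + (avgI w (x + r) r - avgI w x r)) / 2|
        ≤ (2*r)⁻¹ * (C₀ * r * (2*r) ^ (1 - 1/p)) := by
      rw [abs_div, abs_two]
      calc |(avgI w (x - r) r - avgI w x r) + (avgI w (x + r) r - avgI w x r)| / 2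
          ≤ (|avgI w (x - r) r - avgI w x r| + |avgI w (x + r) r - avgI w x r|) / 2 := by
            gcongr
            exact abs_add_le _ _
        _ ≤ ((2*r)⁻¹ * (C₀ * r * (2*r) ^ (1 - 1/p))
              + (2*r)⁻¹ * (C₀ * r * (2*r) ^ (1 - 1/p))) / 2 := by gcongr
        _ = (2*r)⁻¹ * (C₀ * r * (2*r) ^ (1 - 1/p)) := by ring
    refine hbound.trans (le_of_eq ?_)
    rw [hrpow]
    have h2rne : (2*r : ℝ) ≠ 0 := by positivity
    field_simp
  -- pointwise limits
  have hcauchy : ∀ x : ℝ, ∃ l : ℝ, Tendsto (fun n => a n x) atTop (𝓝 l) := fun x =>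
    cauchySeq_tendsto_of_complete (cauchySeq_of_le_geometric ρ (C₀/2) hρ1 (fun n => hgeo x n))
  choose g hg using hcauchy
  have hdist : ∀ (x : ℝ) (n : ℕ), dist (a n x) (g x) ≤ (C₀/2) * ρ^n / (1 - ρ) := fun x n =>
    dist_le_of_le_geometric_of_tendsto ρ (C₀/2) hρ1 (fun m => hgeo x m) (hg x) n
  -- continuity of each dyadic average
  have hacont : ∀ n : ℕ, Continuous (a n) := by
    intro n
    set r : ℝ := (1/2:ℝ)^n with hrdef
    have hr0 : 0 < r := hrpos n
    set K : ℝ := (2*r)⁻¹ * (C₀ * (2*r) ^ (1 - 1/p)) with hKdef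
    have hlip : LipschitzWith (Real.toNNReal K) (a n) := by
      apply LipschitzWith.of_dist_le_mul
      intro y x
      have hh := hAshift x (y - x) r hr0
      have e : x + (y - x) = y := by ring
      rw [e] at hh
      have h1 : dist (a n y) (a n x) ≤ K * |y - x| := by
        rw [Real.dist_eq]
        refine hh.trans (le_of_eq ?_)
        rw [hKdef]; ring
      refine h1.trans ?_
      rw [Real.dist_eq]
      exact mul_le_mul_of_nonneg_right (Real.le_coe_toNNReal K) (abs_nonneg _)
    exact hlip.continuous
  -- uniform convergence, hence continuity of g
  have hunif : TendstoUniformly (fun n x => a n x) g atTop := by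
    rw [Metric.tendstoUniformly_iff]
    intro ε hε
    have htend : Tendsto (fun n : ℕ => (C₀/2) * ρ^n / (1-ρ)) atTop (𝓝 0) := by
      have h0 := tendsto_pow_atTop_nhds_zero_of_lt_one hρ0.le hρ1
      have := (h0.const_mul (C₀/2)).div_const (1-ρ)
      simpa using this
    filter_upwards [htend.eventually (gt_mem_nhds hε)] with n hn x
    calc dist (g x) (a n x) = dist (a n x) (g x) := dist_comm _ _
      _ ≤ (C₀/2) * ρ^n / (1-ρ) := hdist x n
      _ < ε := hn
  have hgcont : Continuous g := hunif.continuous (Frequently.of_forall hacont)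
  refine ⟨g, hgcont, ?_⟩
  -- Lebesgue differentiation
  have hae := IsUnifLocDoublingMeasure.ae_tendsto_average (μ := (volume : Measure ℝ)) hwl 1
  filter_upwards [hae] with x hx
  have hδ : Tendsto (fun n : ℕ => (1/2:ℝ)^n) atTop (𝓝[>] 0) :=
    tendsto_nhdsWithin_of_tendsto_nhds_of_eventually_within _
      (tendsto_pow_atTop_nhds_zero_of_lt_one (by norm_num) (by norm_num))
      (Eventually.of_forall fun n => hrpos n)
  have hmem : ∀ᶠ n : ℕ in atTop, x ∈ closedBall x (1 * (1/2:ℝ)^n) :=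
    Eventually.of_forall fun n => mem_closedBall_self (by positivity)
  have hx' := hx (fun _ => x) (fun n : ℕ => (1/2:ℝ)^n) hδ hmem
  have heq : (fun n : ℕ => ⨍ y in closedBall x ((1/2:ℝ)^n), w y) = fun n => a n x :=
    funext fun n => avgI_eq_average w x _ (hrpos n)
  rw [heq] at hx'
  exact tendsto_nhds_unique hx' (hg x)

/-- If `u₀` is Lipschitz with compact support, `w ∈ L^p(ℝ)` with `1 < p < ∞`, and the
translation-stability estimate `‖w(·+h) − w‖_{L^p} ≤ α‖u₀(·+h) − u₀‖_{L^p}` holds for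
every `h`, then `w` agrees a.e. with a continuous function. -/
theorem lp_translation_stability_implies_continuous_representative
    (p : ℝ) (hp : 1 < p)
    (u₀ : ℝ → ℝ) (L : NNReal) (hu₀ : LipschitzWith L u₀)
    (hsupp : HasCompactSupport u₀)
    (w : ℝ → ℝ) (hw : MemLp w (ENNReal.ofReal p) (volume : Measure ℝ))
    (α : ℝ) (hα : 0 ≤ α)
    (hstab : ∀ h : ℝ,
      eLpNorm (fun x => w (x + h) - w x) (ENNReal.ofReal p) (volume : Measure ℝ)
        ≤ ENNReal.ofReal α *
          eLpNorm (fun x => u₀ (x + h) - u₀ x) (ENNReal.ofReal p) (volume : Measure ℝ)) :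
    ∃ g : ℝ → ℝ, Continuous g ∧ w =ᵐ[volume] g := by
  have hp0 : (0:ℝ) < p := one_pos.trans hp
  have hqR : (ENNReal.ofReal p).toReal = p := ENNReal.toReal_ofReal hp0.le
  set T : Set ℝ := tsupport u₀ with hT
  have hTm : MeasurableSet T := (isClosed_tsupport u₀).measurableSet
  have hTfin : volume T ≠ ⊤ := hsupp.measure_lt_top.ne
  set M : ℝ := (2 * volume T).toReal with hMdef
  have hM : 0 ≤ M := ENNReal.toReal_nonneg
  set C₀ : ℝ := α * (M ^ p⁻¹ * (L:ℝ)) with hC₀def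
  have hM : (0:ℝ) ≤ M := ENNReal.toReal_nonneg
  apply aux_continuous_rep p hp w hw C₀
    (by rw [hC₀def]; positivity)
  intro h
  refine (hstab h).trans ?_
  have hbound : ∀ x : ℝ, ‖u₀ (x + h) - u₀ x‖ ≤ (L:ℝ) * |h| := by
    intro x
    have hd := hu₀.dist_le_mul (x + h) x
    rw [Real.dist_eq, Real.dist_eq] at hd
    simpa [add_sub_cancel_left] using hd
  set s₀ : Set ℝ := T ∪ ((fun x => x + h) ⁻¹' T) with hs₀def
  have hs₀m : MeasurableSet s₀ := hTm.union (hTm.preimage (measurable_add_const h))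
  have hind : (fun x => u₀ (x + h) - u₀ x) = s₀.indicator (fun x => u₀ (x + h) - u₀ x) := by
    funext x
    by_cases hx : x ∈ s₀
    · rw [Set.indicator_of_mem hx]
    · rw [Set.indicator_of_notMem hx]
      have h1 : x ∉ T := fun hc => hx (Or.inl hc)
      have h2 : x + h ∉ T := fun hc => hx (Or.inr hc)
      rw [image_eq_zero_of_notMem_tsupport h1, image_eq_zero_of_notMem_tsupport h2, sub_zero]
  have hle1 : eLpNorm (fun x => u₀ (x + h) - u₀ x) (ENNReal.ofReal p) volume
      ≤ (volume s₀) ^ p⁻¹ * ENNReal.ofReal ((L:ℝ) * |h|) := by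
    rw [hind, eLpNorm_indicator_eq_eLpNorm_restrict hs₀m]
    have hb := eLpNorm_le_of_ae_bound (μ := volume.restrict s₀) (p := ENNReal.ofReal p)
      (f := fun x => u₀ (x + h) - u₀ x) (C := (L:ℝ) * |h|) (Eventually.of_forall hbound)
    simpa [Measure.restrict_apply_univ, hqR] using hb
  have hvol : volume s₀ ≤ ENNReal.ofReal M := by
    calc volume s₀ ≤ volume T + volume ((fun x => x + h) ⁻¹' T) := measure_union_le _ _
      _ = 2 * volume T := by rw [measure_preimage_add_right]; ring
      _ = ENNReal.ofReal M := by
          rw [hMdef, ENNReal.ofReal_toReal (by finiteness)]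
  calc ENNReal.ofReal α * eLpNorm (fun x => u₀ (x + h) - u₀ x) (ENNReal.ofReal p) volume
      ≤ ENNReal.ofReal α * ((ENNReal.ofReal M) ^ p⁻¹ * ENNReal.ofReal ((L:ℝ) * |h|)) := by
        refine mul_le_mul_right (hle1.trans ?_) _
        exact mul_le_mul_left (ENNReal.rpow_le_rpow hvol (by positivity)) _
    _ = ENNReal.ofReal (C₀ * |h|) := by
        rw [ENNReal.ofReal_rpow_of_nonneg hM (by positivity), ← ENNReal.ofReal_mul (by positivity),
          ← ENNReal.ofReal_mul hα]
        congr 1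
        rw [hC₀def]; ring
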